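/- Let d ≥ 1 and s > 0, and define u₊ : (Fin d → ℝ) × (Fin d → ℝ) × ℝ → ℂ by u₊(x, y, t) := exp(2πi t)·exp(-πs·∑_j x_j²)·∏_{j=1}^d θ(y_j + i·s·x_j, i·s), where θ is Jacobi's theta function (jacobiTheta₂). Then u₊ is invariant under the left action of the integer lattice of the Heisenberg group: for all a, b ∈ ℤ^d and c ∈ ℤ, u₊(x + a, y + b, t + c + a·y) = u₊(x, y, t) for every (x, y, t), where a·y = ∑_j a_j y_j. Consequently u₊ descends to a well-defined function on the compact Heisenberg manifold Γ\ℍ_d. -/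
import Mathlib


open Complex Real

/-- Quasi-periodicity of the Jacobi theta function under integer lattice shifts:
`θ(z + m + nτ, τ) = exp(-πi(n²τ + 2nz)) θ(z, τ)` for `m, n ∈ ℤ`. -/
lemma theta_int_shift (z τ : ℂ) (m n : ℤ) :
    jacobiTheta₂ (z + m + n * τ) τ
      = cexp (-π * I * (n ^ 2 * τ + 2 * n * z)) * jacobiTheta₂ z τ := by
  conv_rhs => rw [jacobiTheta₂, ← tsum_mul_left, ← (Equiv.addRight n).tsum_eq]
  refine tsum_congr (fun k ↦ ?_)
  simp_rw [jacobiTheta₂_term, ← Complex.exp_add, Equiv.coe_addRight, Int.cast_add]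
  rw [show 2 * π * I * k * (z + m + n * τ) + π * I * k ^ 2 * τ
      = (-π * I * (n ^ 2 * τ + 2 * n * z) + (2 * π * I * (k + n) * z + π * I * (k + n) ^ 2 * τ))
        + (k * m : ℤ) * (2 * π * I) by push_cast; ring]
  rw [Complex.exp_add, Complex.exp_int_mul_two_pi_mul_I, mul_one]

/-- The null-eigenvector `u₊` of the Yamabe operator on the compact Heisenberg
manifold: `u₊(x,y,t) = e^{2πit} e^{-πs|x|²} ∏_j θ(y_j + i s x_j, i s)`. -/
noncomputable def uPlus (d : ℕ) (s : ℝ) (x y : Fin d → ℝ) (t : ℝ) : ℂ :=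
  Complex.exp (2 * Real.pi * Complex.I * t)
    * Complex.exp (-(Real.pi * s) * ∑ j, ((x j : ℂ)) ^ 2)
    * ∏ j, jacobiTheta₂ ((y j : ℂ) + Complex.I * s * (x j : ℂ)) (Complex.I * s)

/-- `u₊` is invariant under the left action of the integer lattice of the
Heisenberg group: `u₊(x+a, y+b, t+c+a·y) = u₊(x,y,t)` for `a, b ∈ ℤ^d`,
`c ∈ ℤ`.  Hence `u₊` descends to the compact Heisenberg manifold `Γ\ℍ_d`. -/
theorem uPlus_lattice_invariant (d : ℕ) (hd : 1 ≤ d) (s : ℝ) (hs : 0 < s)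
    (a b : Fin d → ℤ) (c : ℤ) (x y : Fin d → ℝ) (t : ℝ) :
    uPlus d s (fun j => x j + (a j : ℝ)) (fun j => y j + (b j : ℝ))
        (t + (c : ℝ) + ∑ j, (a j : ℝ) * y j)
      = uPlus d s x y t := by
  unfold uPlus
  have hθ : ∀ j : Fin d,
      jacobiTheta₂ (((y j + (b j : ℝ) : ℝ) : ℂ) + Complex.I * s * ((x j + (a j : ℝ) : ℝ) : ℂ))
          (Complex.I * s)
        = cexp (-π * I * ((a j : ℂ) ^ 2 * (Complex.I * s)
              + 2 * (a j : ℂ) * ((y j : ℂ) + Complex.I * s * (x j : ℂ))))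
          * jacobiTheta₂ ((y j : ℂ) + Complex.I * s * (x j : ℂ)) (Complex.I * s) := by
    intro j
    rw [← theta_int_shift]
    congr 1
    push_cast
    ring
  simp only [hθ, Finset.prod_mul_distrib, ← Complex.exp_sum]
  have hsum : (2 * (π : ℂ) * I) * (∑ j, (a j : ℂ) * (y j : ℂ))
        + (-(π * s : ℂ)) * ∑ j, ((x j : ℂ) + (a j : ℂ)) ^ 2
        + ∑ j, (-π * I * ((a j : ℂ) ^ 2 * (Complex.I * s)
              + 2 * (a j : ℂ) * ((y j : ℂ) + Complex.I * s * (x j : ℂ))))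
      = (-(π * s : ℂ)) * ∑ j, (x j : ℂ) ^ 2 := by
    simp_rw [Finset.mul_sum, ← Finset.sum_add_distrib]
    refine Finset.sum_congr rfl fun j _ => ?_
    linear_combination ((-(π : ℂ) * s) * ((a j : ℂ) ^ 2 + 2 * (a j : ℂ) * (x j : ℂ)))
      * Complex.I_mul_I
  rw [show ∀ P : ℂ, cexp (2 * π * I * ((t + (c : ℝ) + ∑ j, (a j : ℝ) * y j : ℝ) : ℂ))
      * cexp (-(π * s : ℂ) * ∑ j, (((x j + (a j : ℝ) : ℝ)) : ℂ) ^ 2)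
      * (cexp (∑ j, -π * I * ((a j : ℂ) ^ 2 * (Complex.I * s)
              + 2 * (a j : ℂ) * ((y j : ℂ) + Complex.I * s * (x j : ℂ)))) * P)
      = cexp (2 * π * I * ((t + (c : ℝ) + ∑ j, (a j : ℝ) * y j : ℝ) : ℂ)
          + -(π * s : ℂ) * ∑ j, (((x j + (a j : ℝ) : ℝ)) : ℂ) ^ 2
          + ∑ j, -π * I * ((a j : ℂ) ^ 2 * (Complex.I * s)
              + 2 * (a j : ℂ) * ((y j : ℂ) + Complex.I * s * (x j : ℂ)))) * P
      from fun P => by rw [Complex.exp_add, Complex.exp_add]; ring]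
  rw [show (2 * (π : ℂ) * I * ((t + (c : ℝ) + ∑ j, (a j : ℝ) * y j : ℝ) : ℂ)
          + -(π * s : ℂ) * ∑ j, (((x j + (a j : ℝ) : ℝ)) : ℂ) ^ 2
          + ∑ j, -π * I * ((a j : ℂ) ^ 2 * (Complex.I * s)
              + 2 * (a j : ℂ) * ((y j : ℂ) + Complex.I * s * (x j : ℂ))))
      = (2 * π * I * (t : ℂ) + -(π * s : ℂ) * ∑ j, (x j : ℂ) ^ 2) + (c : ℤ) * (2 * π * I) by
        push_cast
        linear_combination hsum]
  rw [Complex.exp_add, Complex.exp_int_mul_two_pi_mul_I, mul_one, Complex.exp_add, mul_assoc]
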